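/- arXiv:math/0510113 — 3 statements merged into one kernel-verified Lean document; each statement's English description precedes it below -/
import Mathlib

section
/- For every prime p, the measure μ₊(x)dx on [-2,2] with density μ₊(x) = ((p-1)/(2π)) · √(4-x²)/((p^{1/2} + p^{-1/2} - x)²) is a probability measure, i.e., ∫_{-2}^{2} μ₊(x) dx = 1. -/
open Real MeasureTheory

lemma mu_aux (a b : ℝ) (ha : 2 < a) (hb : 0 < b) (hab : b ^ 2 = a ^ 2 - 4) :
    ∫ x in (-2:ℝ)..2, Real.sqrt (4 - x ^ 2) / (a - x) ^ 2 = π * (a / b - 1) := by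
  set F : ℝ → ℝ := fun x => Real.sqrt (4 - x ^ 2) / (a - x) - Real.arcsin (x / 2)
    + (a / b) * Real.arcsin ((a * x - 4) / (2 * (a - x))) with hF
  have hax : ∀ x : ℝ, x ∈ Set.Icc (-2:ℝ) 2 → a - x ≠ 0 := by
    intro x hx
    have := hx.2
    nlinarith
  have hcont : ContinuousOn F (Set.Icc (-2:ℝ) 2) := by
    apply ContinuousOn.add
    apply ContinuousOn.sub
    · exact ContinuousOn.div (by fun_prop) (by fun_prop) (hax)
    · exact (Real.continuous_arcsin.comp (by continuity)).continuousOn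
    · apply ContinuousOn.mul continuousOn_const
      apply Real.continuous_arcsin.comp_continuousOn
      exact ContinuousOn.div (by fun_prop) (by fun_prop)
        (fun x hx => by simpa using hax x hx)
  have hderiv : ∀ x ∈ Set.Ioo (-2:ℝ) 2, HasDerivAt F (Real.sqrt (4 - x ^ 2) / (a - x) ^ 2) x := by
    intro x hx
    obtain ⟨hx1, hx2⟩ := hx
    have h4 : (0:ℝ) < 4 - x ^ 2 := by nlinarith
    have hax' : (0:ℝ) < a - x := by nlinarith
    set s := Real.sqrt (4 - x ^ 2) with hs
    have hspos : 0 < s := Real.sqrt_pos.mpr h4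
    have hssq : s ^ 2 = 4 - x ^ 2 := Real.sq_sqrt h4.le
    -- derivative of sqrt(4 - x^2)
    have hds : HasDerivAt (fun y : ℝ => Real.sqrt (4 - y ^ 2)) (-x / s) x := by
      have h1 : HasDerivAt (fun y : ℝ => 4 - y ^ 2) (-(2 * x)) x := by
        simpa using ((hasDerivAt_pow 2 x).const_sub 4)
      have := (Real.hasDerivAt_sqrt (ne_of_gt h4)).comp x h1
      refine this.congr_deriv ?_
      rw [← hs]
      field_simp
    -- derivative of first term
    have hd1 : HasDerivAt (fun y : ℝ => Real.sqrt (4 - y ^ 2) / (a - y))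
        (((-x / s) * (a - x) - s * (-1)) / (a - x) ^ 2) x := by
      exact hds.div (by simpa using (hasDerivAt_id x).const_sub a) (ne_of_gt hax')
    -- derivative of arcsin(x/2)
    have hd2 : HasDerivAt (fun y : ℝ => Real.arcsin (y / 2))
        ((1 / Real.sqrt (1 - (x / 2) ^ 2)) * (1 / 2)) x := by
      have h1 : HasDerivAt (fun y : ℝ => y / 2) (1 / 2) x := by
        simpa using (hasDerivAt_id x).div_const 2
      exact (Real.hasDerivAt_arcsin (by nlinarith) (by nlinarith)).comp x h1
    -- the inner function u
    set u := (a * x - 4) / (2 * (a - x)) with hu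
    have husq : 1 - u ^ 2 = (4 - x ^ 2) * (a ^ 2 - 4) / (2 * (a - x)) ^ 2 := by
      rw [hu]
      field_simp
      ring
    have ha2 : 0 < a ^ 2 - 4 := by nlinarith
    have hupos : 0 < 1 - u ^ 2 := by rw [husq]; positivity
    have hdu : HasDerivAt (fun y : ℝ => (a * y - 4) / (2 * (a - y)))
        ((a * (2 * (a - x)) - (a * x - 4) * (-2)) / (2 * (a - x)) ^ 2) x := by
      have h1 : HasDerivAt (fun y : ℝ => a * y - 4) a x := by
        simpa using ((hasDerivAt_id x).const_mul a).sub_const 4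
      have h2 : HasDerivAt (fun y : ℝ => 2 * (a - y)) (-2) x := by
        have := ((hasDerivAt_id x).const_sub a).const_mul 2
        simpa using this
      exact h1.div h2 (by positivity)
    have hd3 : HasDerivAt (fun y : ℝ => Real.arcsin ((a * y - 4) / (2 * (a - y))))
        ((1 / Real.sqrt (1 - u ^ 2)) *
          ((a * (2 * (a - x)) - (a * x - 4) * (-2)) / (2 * (a - x)) ^ 2)) x := by
      exact (Real.hasDerivAt_arcsin (by nlinarith) (by nlinarith)).comp x hdu
    have hD : HasDerivAt F
        ((((-x / s) * (a - x) - s * (-1)) / (a - x) ^ 2)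
          - ((1 / Real.sqrt (1 - (x / 2) ^ 2)) * (1 / 2))
          + (a / b) * ((1 / Real.sqrt (1 - u ^ 2)) *
            ((a * (2 * (a - x)) - (a * x - 4) * (-2)) / (2 * (a - x)) ^ 2))) x := by
      exact (hd1.sub hd2).add (hd3.const_mul (a / b))
    convert hD using 1
    -- simplify the sqrt expressions
    have hsq1 : Real.sqrt (1 - (x / 2) ^ 2) = s / 2 := by
      have h : (s / 2) ^ 2 = 1 - (x / 2) ^ 2 := by rw [div_pow, hssq]; ring
      rw [← h, Real.sqrt_sq (by positivity)]
    have hsq2 : Real.sqrt (1 - u ^ 2) = s * b / (2 * (a - x)) := by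
      have h : (s * b / (2 * (a - x))) ^ 2 = 1 - u ^ 2 := by
        rw [husq, div_pow, mul_pow, hssq, hab]
      rw [← h, Real.sqrt_sq (by positivity)]
    rw [hsq1, hsq2]
    have hb' : b ≠ 0 := ne_of_gt hb
    field_simp
    linear_combination (a * (a - x)) * hab
  have hint : IntervalIntegrable (fun x : ℝ => Real.sqrt (4 - x ^ 2) / (a - x) ^ 2)
      volume (-2) 2 := by
    apply ContinuousOn.intervalIntegrable
    rw [Set.uIcc_of_le (by norm_num)]
    exact ContinuousOn.div (by fun_prop) (by fun_prop)
      (fun x hx => pow_ne_zero 2 (hax x hx))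
  rw [intervalIntegral.integral_eq_sub_of_hasDerivAt_of_le (by norm_num) hcont hderiv hint]
  have ha2 : a - 2 ≠ 0 := by nlinarith
  have ha2' : a + 2 ≠ 0 := by nlinarith
  have e1 : (a * 2 - 4) / (2 * (a - 2)) = 1 := by field_simp; ring
  have e2 : (a * (-2) - 4) / (2 * (a - (-2))) = -1 := by
    rw [div_eq_iff (by intro h; apply ha2'; linarith [mul_eq_zero.mp h])]
    ring
  rw [hF]
  simp only [e1, e2, Real.arcsin_one, Real.arcsin_neg_one]
  have : Real.sqrt (4 - (2:ℝ) ^ 2) = 0 := by norm_num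
  rw [this]
  have : Real.sqrt (4 - (-2:ℝ) ^ 2) = 0 := by norm_num
  rw [this]
  field_simp
  rw [Real.arcsin_one, Real.arcsin_neg_one]
  ring

/-- For every prime `p`, the density `μ₊(x) = ((p-1)/(2π)) · √(4-x²)/((√p + 1/√p - x)²)`
on `[-2,2]` integrates to `1`. -/
theorem mu_plus_is_probability (p : ℕ) (hp : p.Prime) :
    ∫ x in (-2:ℝ)..2,
      (((p : ℝ) - 1) / (2 * π)) * Real.sqrt (4 - x ^ 2) /
        (Real.sqrt p + 1 / Real.sqrt p - x) ^ 2 = 1 := by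
  have hp1 : (1:ℝ) < p := by exact_mod_cast hp.one_lt
  set q := Real.sqrt p with hq
  have hq0 : 0 < q := Real.sqrt_pos.mpr (by linarith)
  have hq1 : 1 < q := by
    rw [hq, show (1:ℝ) = Real.sqrt 1 by simp]
    exact Real.sqrt_lt_sqrt (by norm_num) hp1
  have hqsq : q ^ 2 = (p : ℝ) := Real.sq_sqrt (by positivity)
  set a := q + 1 / q with haq
  set b := q - 1 / q with hbq
  have ha : 2 < a := by
    rw [haq]
    rw [show q + 1 / q = ((q - 1) ^ 2 + 2 * q) / q by field_simp; ring, lt_div_iff₀ hq0]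
    nlinarith [sq_nonneg (q - 1)]
  have hb : 0 < b := by
    rw [hbq]
    have : 1 / q < 1 := by rw [div_lt_one hq0]; exact hq1
    linarith
  have hab : b ^ 2 = a ^ 2 - 4 := by
    rw [haq, hbq]
    field_simp
    ring
  have hrw : ∀ x : ℝ, (((p : ℝ) - 1) / (2 * π)) * Real.sqrt (4 - x ^ 2) / (a - x) ^ 2
      = (((p : ℝ) - 1) / (2 * π)) * (Real.sqrt (4 - x ^ 2) / (a - x) ^ 2) := by
    intro x; rw [mul_div_assoc]
  simp_rw [hrw]
  rw [intervalIntegral.integral_const_mul, mu_aux a b ha hb hab]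
  have key : a / b - 1 = 2 / ((p:ℝ) - 1) := by
    have h1 : a / b - 1 = (a - b) / b := by field_simp
    rw [h1, ← hqsq, div_eq_div_iff hb.ne' (by nlinarith : ((q:ℝ)^2 - 1) ≠ 0)]
    rw [haq, hbq]
    field_simp
    ring
  rw [key]
  have hne : (p:ℝ) - 1 ≠ 0 := by linarith
  field_simp
end

section
/- Let p > 1 be real and δ ∈ ℂ with δ ≠ 0, δ² ≠ 1. Define A_n = δ^{2n} + δ^{-2n} - (p-1)·(δ^{2n-1} - δ^{-2n+1})/(δ - δ^{-1}) for n ≥ 1 and A_0 = 1. Then for every n ≥ 1, the 'constant-term extraction' identity holds: A_n + (1 - 1/p)·∑_{m=1}^{n} p^m A_{n-m} = δ^{2n} + δ^{-2n} + (1 - 1/p)·∑_{j=-n+1}^{n-1} c_j δ^{2j} with all coefficients c_j = 0; i.e., A_n + (1 - 1/p)(pA_{n-1} + p²A_{n-2} + ⋯ + pⁿA_0) = δ^{2n} + δ^{-2n}. -/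
open Complex

theorem step_lemma (p : ℂ) (δ : ℂ) (hδ0 : δ ≠ 0) (hne : δ - δ⁻¹ ≠ 0) (k : ℤ) :
    (δ ^ (2*k+2) + δ ^ (-(2*k+2)) - (p-1)*(δ ^ (2*k+1) - δ ^ (-(2*k+2)+1))/(δ-δ⁻¹))
      - (δ ^ (2*k) + δ ^ (-(2*k)) - (p-1)*(δ ^ (2*k-1) - δ ^ (-(2*k)+1))/(δ-δ⁻¹))
      + p*(δ ^ (2*k) + δ ^ (-(2*k))) = δ ^ (2*k+2) + δ ^ (-(2*k+2)) := by
  have key : δ ^ (2*k+1) - δ ^ (-(2*k+2)+1) - (δ ^ (2*k-1) - δ ^ (-(2*k)+1))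
      = (δ - δ⁻¹) * (δ ^ (2*k) + δ ^ (-(2*k))) := by
    simp only [show -(2*k+2)+1 = -(2*k) + (-1) by ring, show 2*k-1 = 2*k + (-1) by ring,
      show (2*k+1 : ℤ) = 2*k + 1 from rfl, show -(2*k)+1 = -(2*k) + 1 from rfl,
      zpow_add₀ hδ0, zpow_one, zpow_neg_one]
    ring
  have hd' : (p-1)*(δ ^ (2*k+1) - δ ^ (-(2*k+2)+1))/(δ-δ⁻¹)
      - (p-1)*(δ ^ (2*k-1) - δ ^ (-(2*k)+1))/(δ-δ⁻¹)
      = (p-1)*(δ ^ (2*k) + δ ^ (-(2*k))) := by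
    rw [div_sub_div_same, ← mul_sub, key, mul_comm (δ - δ⁻¹), ← mul_assoc,
      mul_div_assoc, div_self hne, mul_one]
  linear_combination -hd'

/-- Constant-term extraction identity: with `A₀ = 1` and
`Aₙ = δ^{2n} + δ^{-2n} - (p-1)(δ^{2n-1} - δ^{-2n+1})/(δ - δ^{-1})` for `n ≥ 1`,
one has `Aₙ + (1 - 1/p)(pA_{n-1} + p²A_{n-2} + ⋯ + pⁿA₀) = δ^{2n} + δ^{-2n}`. -/
theorem constant_term_extraction (p : ℝ) (hp : 1 < p) (δ : ℂ) (hδ0 : δ ≠ 0)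
    (hδ1 : δ ^ 2 ≠ 1) (A : ℕ → ℂ) (hA0 : A 0 = 1)
    (hA : ∀ n : ℕ, 1 ≤ n →
      A n = δ ^ (2 * (n : ℤ)) + δ ^ (-(2 * (n : ℤ))) -
        ((p : ℂ) - 1) * (δ ^ (2 * (n : ℤ) - 1) - δ ^ (-(2 * (n : ℤ)) + 1)) /
          (δ - δ⁻¹))
    (n : ℕ) (hn : 1 ≤ n) :
    A n + (1 - 1 / (p : ℂ)) * ∑ m ∈ Finset.Icc 1 n, (p : ℂ) ^ m * A (n - m) =
      δ ^ (2 * (n : ℤ)) + δ ^ (-(2 * (n : ℤ))) := by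
  have hp0 : (p : ℂ) ≠ 0 := by
    exact_mod_cast ne_of_gt (lt_trans one_pos hp)
  have h1 : δ ^ 2 - 1 ≠ 0 := sub_ne_zero.mpr hδ1
  have hne : δ - δ⁻¹ ≠ 0 := by
    intro h
    apply h1
    have h2 := congrArg (· * δ) h
    simp only [sub_mul, inv_mul_cancel₀ hδ0, zero_mul] at h2
    linear_combination h2
  have hq : (1 - 1 / (p : ℂ)) * p = p - 1 := by field_simp
  induction n, hn using Nat.le_induction with
  | base =>
    simp only [Finset.Icc_self, Finset.sum_singleton, Nat.sub_self, hA0, pow_one, mul_one]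
    rw [hA 1 le_rfl]
    have h2 : δ ^ (2 * ((1:ℕ) : ℤ) - 1) - δ ^ (-(2 * ((1:ℕ) : ℤ)) + 1) = δ - δ⁻¹ := by
      norm_num
    rw [h2, mul_div_assoc, div_self hne, mul_one]
    linear_combination hq
  | succ n hn ih =>
    have hrec : ∑ m ∈ Finset.Icc 1 (n+1), (p : ℂ) ^ m * A (n + 1 - m)
        = (p : ℂ) * A n + (p : ℂ) * ∑ m ∈ Finset.Icc 1 n, (p : ℂ) ^ m * A (n - m) := by
      rw [← Finset.Ico_add_one_right_eq_Icc, ← Finset.Ico_add_one_right_eq_Icc, Finset.sum_Ico_eq_sum_range,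
        Finset.sum_Ico_eq_sum_range]
      simp only [Nat.succ_sub_one, Nat.add_sub_cancel]
      rw [Finset.sum_range_succ', Finset.mul_sum]
      have h0 : (p : ℂ) ^ (1 + 0) * A (n + 1 - (1 + 0)) = (p : ℂ) * A n := by
        norm_num
      rw [h0]
      rw [add_comm ((p:ℂ) * A n)]
      congr 1
      apply Finset.sum_congr rfl
      intro i _
      have : n + 1 - (1 + (i + 1)) = n - (1 + i) := by omega
      rw [this]
      ring
    rw [hrec]
    have hst := step_lemma p δ hδ0 hne (n : ℤ)
    have e1 := hA (n+1) (by omega)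
    have e2 := hA n hn
    have hcast : ((n + 1 : ℕ) : ℤ) = (n : ℤ) + 1 := by push_cast; ring
    simp only [hcast, show 2 * ((n:ℤ) + 1) = 2 * (n:ℤ) + 2 by ring,
      show 2 * ((n:ℤ) + 1) - 1 = 2 * (n:ℤ) + 1 by ring,
      show -(2 * ((n:ℤ) + 1)) + 1 = -(2 * (n:ℤ) + 2) + 1 by ring,
      show 2 * (n:ℤ) + 2 - 1 = 2 * (n:ℤ) + 1 by ring] at e1 ⊢
    linear_combination e1 - e2 + hst + (p : ℂ) * ih + (A n) * hq
end

section
/- Let p > 1. For n ≥ 1 define the Laurent polynomial φₙ(T) = p^{n/2}·[Tⁿ + T^{-n} + (1 - 1/p)·(T^{n-2} + T^{n-4} + ⋯ + T^{-(n-2)})] in T = p^s, and φ₀ = 1. With the normalized inner product ⟨Tᵃ, Tᵇ⟩ = 1 if a+b = 0 and 0 otherwise (extended bilinearly), and F_ev(T) = 1 + ∑_{m≥1} A_m T^{2m}p^{-m} with A_m = δ^{2m}+δ^{-2m} - (p-1)(δ^{2m-1}-δ^{-2m+1})/(δ-δ^{-1}), one has ⟨φ_{2n}, F_ev⟩ =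 δ^{2n} + δ^{-2n} for all n ≥ 1 and ⟨φ₀, F_ev⟩ = 1. -/
open Complex

open Finset in
lemma satake_key (p δ : ℂ) (hp : p ≠ 0) (hδ0 : δ ≠ 0) (hδ1 : δ ^ 2 - 1 ≠ 0) (A : ℕ → ℂ)
    (hA : ∀ m : ℕ, 1 ≤ m →
      A m = δ ^ (2 * (m : ℤ)) + δ ^ (-(2 * (m : ℤ))) -
        (p - 1) * (δ ^ (2 * (m : ℤ) - 1) - δ ^ (-(2 * (m : ℤ)) + 1)) /
          (δ - δ⁻¹)) :
    ∀ m : ℕ, p ^ (m + 1) * (1 - 1 / p) *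
        (1 + ∑ k ∈ Finset.range m, A (k + 1) * p ^ (-((k : ℤ) + 1))) + A (m + 1) =
      δ ^ (2 * ((m : ℤ) + 1)) + δ ^ (-(2 * ((m : ℤ) + 1))) := by
  have hne : δ - δ⁻¹ ≠ 0 := by
    intro h
    apply hδ1
    field_simp at h
    linear_combination h
  intro m
  induction m with
  | zero =>
      simp only [Finset.range_zero, Finset.sum_empty, add_zero]
      rw [hA 1 le_rfl]
      push_cast
      norm_num
      rw [mul_div_assoc, div_self hne]
      field_simp
      ring
  | succ m ih =>
      rw [Finset.sum_range_succ]
      push_cast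
      have hpow : p ^ (m + 1 + 1) * p ^ (-((m:ℤ) + 1)) = p := by
        rw [← zpow_natCast p (m+1+1), ← zpow_add₀ hp]
        push_cast
        ring_nf
        exact zpow_one p
      have hppow : p ^ (m + 1 + 1) * (1 - 1/p) * (A (m+1) * p ^ (-((m:ℤ) + 1)))
          = (p - 1) * A (m+1) := by
        rw [show p ^ (m+1+1) * (1 - 1/p) * (A (m+1) * p ^ (-((m:ℤ)+1)))
          = (p ^ (m+1+1) * p ^ (-((m:ℤ)+1))) * ((1 - 1/p) * A (m+1)) by ring, hpow]
        field_simp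
      have expand : p ^ (m + 1 + 1) * (1 - 1 / p) *
          (1 + (∑ k ∈ Finset.range m, A (k + 1) * p ^ (-((k : ℤ) + 1)) + A (m+1) * p ^ (-((m:ℤ) + 1))))
          = p * (p ^ (m + 1) * (1 - 1 / p) *
            (1 + ∑ k ∈ Finset.range m, A (k + 1) * p ^ (-((k : ℤ) + 1)))) + (p - 1) * A (m+1) := by
        rw [← hppow]; ring
      rw [expand, eq_sub_of_add_eq ih]
      rw [hA (m+1) (by omega), hA (m+1+1) (by omega)]
      push_cast
      set X := δ ^ (2 * ((m:ℤ) + 1)) with hXdef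
      have hXinv : δ ^ (-(2 * ((m:ℤ) + 1))) = X⁻¹ := by rw [zpow_neg]
      have h1 : δ ^ (2 * ((m:ℤ) + 1) - 1) = X * δ⁻¹ := zpow_sub_one₀ hδ0 _
      have h2 : δ ^ (-(2 * ((m:ℤ) + 1)) + 1) = X⁻¹ * δ := by
        rw [zpow_add_one₀ hδ0, hXinv]
      have h3 : δ ^ (2 * ((m:ℤ) + 1 + 1)) = X * δ ^ 2 := by
        rw [hXdef, show (2 * ((m:ℤ) + 1 + 1)) = 2 * ((m:ℤ)+1) + 2 by ring,
          zpow_add₀ hδ0]; norm_cast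
      have h4 : δ ^ (-(2 * ((m:ℤ) + 1 + 1))) = X⁻¹ * (δ⁻¹) ^ 2 := by
        rw [show (-(2 * ((m:ℤ) + 1 + 1))) = -(2 * ((m:ℤ)+1)) + (-2) by ring,
          zpow_add₀ hδ0, hXinv]
        congr 1
        rw [zpow_neg, inv_pow]
        norm_cast
      have h5 : δ ^ (2 * ((m:ℤ) + 1 + 1) - 1) = X * δ := by
        rw [hXdef, show (2 * ((m:ℤ) + 1 + 1) - 1) = 2 * ((m:ℤ)+1) + 1 by ring,
          zpow_add₀ hδ0, zpow_one]
      have h6 : δ ^ (-(2 * ((m:ℤ) + 1 + 1)) + 1) = X⁻¹ * δ⁻¹ := by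
        rw [show (-(2 * ((m:ℤ) + 1 + 1)) + 1) = -(2 * ((m:ℤ)+1)) + (-1) by ring,
          zpow_add₀ hδ0, hXinv, zpow_neg_one]
      rw [hXinv, h1, h2, h3, h4, h5, h6]
      have hX0 : X ≠ 0 := zpow_ne_zero _ hδ0
      have key : ∀ Y : ℂ, X * Y = 1 →
          p * (X + Y - (X + Y - (p-1) * (X * δ⁻¹ - Y * δ) / (δ - δ⁻¹)))
            + (p-1) * (X + Y - (p-1) * (X * δ⁻¹ - Y * δ) / (δ - δ⁻¹))
            + (X * δ ^ 2 + Y * δ⁻¹ ^ 2 - (p-1) * (X * δ - Y * δ⁻¹) / (δ - δ⁻¹))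
          = X * δ ^ 2 + Y * δ⁻¹ ^ 2 := by
        intro Y hXY
        have h7 : (-1 : ℂ) + δ ^ 2 ≠ 0 := by intro h; exact hδ1 (by linear_combination h)
        field_simp
        ring
      have := key X⁻¹ (mul_inv_cancel₀ hX0)
      linear_combination this

/-- Orthogonality of the Satake transforms `φₙ` against `F_ev`: viewing Laurent
polynomials through their coefficient functions and the pairing
`⟨f, g⟩ = ∑_a f(a)·g(-a)` (the constant term of `f·g`), one has
`⟨φ_{2n}, F_ev⟩ = δ^{2n} + δ^{-2n}` for `n ≥ 1` and `⟨φ₀, F_ev⟩ = 1`. -/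
theorem satake_pairing (p : ℝ) (hp : 1 < p) (δ : ℂ) (hδ0 : δ ≠ 0)
    (hδ1 : δ ^ 2 ≠ 1)
    (φ : ℕ → ℤ → ℂ) (Fev : ℤ → ℂ) (A : ℕ → ℂ)
    (hφ0 : ∀ a : ℤ, φ 0 a = if a = 0 then 1 else 0)
    (hφ : ∀ n : ℕ, 1 ≤ n → ∀ a : ℤ,
      φ n a = (Real.sqrt p : ℂ) ^ n *
        (if a = (n : ℤ) ∨ a = -(n : ℤ) then 1
          else if a.natAbs < n ∧ ((n : ℤ) - a) % 2 = 0 then 1 - 1 / (p : ℂ)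
          else 0))
    (hA : ∀ m : ℕ, 1 ≤ m →
      A m = δ ^ (2 * (m : ℤ)) + δ ^ (-(2 * (m : ℤ))) -
        ((p : ℂ) - 1) * (δ ^ (2 * (m : ℤ) - 1) - δ ^ (-(2 * (m : ℤ)) + 1)) /
          (δ - δ⁻¹))
    (hF : ∀ a : ℤ, Fev a =
      if a = 0 then 1
      else if 0 < a ∧ a % 2 = 0 then A (a.toNat / 2) * (p : ℂ) ^ (-(a / 2))
      else 0) :
    (∀ n : ℕ, 1 ≤ n →
      ∑ a ∈ Finset.Icc (-(2 * (n : ℤ))) (2 * (n : ℤ)), φ (2 * n) a * Fev (-a) =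
        δ ^ (2 * (n : ℤ)) + δ ^ (-(2 * (n : ℤ)))) ∧
    (∑ a ∈ Finset.Icc (0 : ℤ) 0, φ 0 a * Fev (-a) = 1) := by
  have hp0 : (0:ℝ) < p := lt_trans one_pos hp
  have hpc : (p:ℂ) ≠ 0 := by
    simpa using ne_of_gt hp0
  have hsq : ((Real.sqrt p : ℝ) : ℂ) ^ 2 = (p:ℂ) := by
    norm_cast
    exact Real.sq_sqrt hp0.le
  constructor
  · intro n hn
    obtain ⟨m, rfl⟩ : ∃ m, n = m + 1 := ⟨n - 1, by omega⟩
    set n := m + 1 with hndef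
    have hemb : Function.Injective (fun k : ℕ => -(2 * (k : ℤ))) := by
      intro a b h
      simp only at h
      omega
    set emb : ℕ ↪ ℤ := ⟨fun k => -(2 * (k : ℤ)), hemb⟩ with hembdef
    have hmem : ∀ a : ℤ, a ∈ (Finset.range (n+1)).map emb ↔ ∃ k ≤ n, -(2 * (k:ℤ)) = a := by
      intro a
      simp [hembdef, Finset.mem_map, Nat.lt_succ_iff]
    have hsub : (Finset.range (n+1)).map emb ⊆ Finset.Icc (-(2 * (n:ℤ))) (2 * (n:ℤ)) := by
      intro a ha
      rw [hmem] at ha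
      obtain ⟨k, hk, rfl⟩ := ha
      simp only [Finset.mem_Icc]
      omega
    have hzero : ∀ a ∈ Finset.Icc (-(2 * (n:ℤ))) (2 * (n:ℤ)),
        a ∉ (Finset.range (n+1)).map emb → φ (2 * n) a * Fev (-a) = 0 := by
      intro a ha hna
      rw [Finset.mem_Icc] at ha
      rw [hmem] at hna
      push_neg at hna
      have hFa : Fev (-a) = 0 := by
        rw [hF]
        split_ifs with h1 h2
        · exfalso
          have := hna 0 (by omega)
          omega
        · exfalso
          have hk : ∃ k : ℤ, 0 ≤ k ∧ k ≤ (n:ℤ) ∧ a = -(2*k) := ⟨(-a)/2, by omega⟩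
          obtain ⟨k, hk0, hkn, rfl⟩ := hk
          have := hna k.toNat (by omega)
          omega
        · rfl
      rw [hFa, mul_zero]
    rw [← Finset.sum_subset hsub hzero, Finset.sum_map]
    simp only [hembdef, Function.Embedding.coeFn_mk]
    rw [Finset.sum_range_succ, Finset.sum_range_succ']
    -- three kinds of terms
    have hterm0 : φ (2 * n) (-(2 * ((0:ℕ):ℤ))) * Fev (-(-(2 * ((0:ℕ):ℤ))))
        = ((Real.sqrt p : ℝ) : ℂ) ^ (2*n) * (1 - 1/(p:ℂ)) := by
      rw [hφ (2*n) (by omega), hF]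
      have c1 : ¬(-(2 * ((0:ℕ):ℤ)) = ((2*n:ℕ):ℤ) ∨ -(2 * ((0:ℕ):ℤ)) = -((2*n:ℕ):ℤ)) := by
        omega
      have c2 : (-(2 * ((0:ℕ):ℤ))).natAbs < 2*n ∧ (((2*n:ℕ):ℤ) - -(2 * ((0:ℕ):ℤ))) % 2 = 0 := by
        omega
      have c3 : -(-(2 * ((0:ℕ):ℤ))) = 0 := by omega
      rw [if_neg c1, if_pos c2, if_pos c3, mul_one]
    have htermk : ∀ k : ℕ, k < m → φ (2 * n) (-(2 * ((k+1:ℕ):ℤ))) * Fev (-(-(2 * ((k+1:ℕ):ℤ))))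
        = ((Real.sqrt p : ℝ) : ℂ) ^ (2*n) * (1 - 1/(p:ℂ)) * (A (k+1) * (p:ℂ) ^ (-((k:ℤ) + 1))) := by
      intro k hk
      rw [hφ (2*n) (by omega), hF]
      have c1 : ¬(-(2 * ((k+1:ℕ):ℤ)) = ((2*n:ℕ):ℤ) ∨ -(2 * ((k+1:ℕ):ℤ)) = -((2*n:ℕ):ℤ)) := by
        omega
      have c2 : (-(2 * ((k+1:ℕ):ℤ))).natAbs < 2*n ∧ (((2*n:ℕ):ℤ) - -(2 * ((k+1:ℕ):ℤ))) % 2 = 0 := by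
        omega
      have c3 : ¬(-(-(2 * ((k+1:ℕ):ℤ))) = 0) := by omega
      have c4 : (0:ℤ) < -(-(2 * ((k+1:ℕ):ℤ))) ∧ (-(-(2 * ((k+1:ℕ):ℤ)))) % 2 = 0 := by
        omega
      rw [if_neg c1, if_pos c2, if_neg c3, if_pos c4]
      have e1 : (-(-(2 * ((k+1:ℕ):ℤ)))).toNat / 2 = k + 1 := by omega
      have e2 : -((-(-(2 * ((k+1:ℕ):ℤ)))) / 2) = -((k:ℤ)+1) := by omega
      rw [e1, e2]
    have htermn : φ (2 * n) (-(2 * ((n:ℕ):ℤ))) * Fev (-(-(2 * ((n:ℕ):ℤ))))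
        = ((Real.sqrt p : ℝ) : ℂ) ^ (2*n) * (A n * (p:ℂ) ^ (-((n:ℕ):ℤ))) := by
      rw [hφ (2*n) (by omega), hF]
      have c1 : (-(2 * ((n:ℕ):ℤ)) = ((2*n:ℕ):ℤ) ∨ -(2 * ((n:ℕ):ℤ)) = -((2*n:ℕ):ℤ)) := by
        right; omega
      have c3 : ¬(-(-(2 * ((n:ℕ):ℤ))) = 0) := by omega
      have c4 : (0:ℤ) < -(-(2 * ((n:ℕ):ℤ))) ∧ (-(-(2 * ((n:ℕ):ℤ)))) % 2 = 0 := by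
        omega
      rw [if_pos c1, if_neg c3, if_pos c4]
      have e1 : (-(-(2 * ((n:ℕ):ℤ)))).toNat / 2 = n := by omega
      have e2 : -((-(-(2 * ((n:ℕ):ℤ)))) / 2) = -((n:ℕ):ℤ) := by omega
      rw [e1, e2]
      ring
    rw [hterm0, htermn, Finset.sum_congr rfl (fun k hk => htermk k (Finset.mem_range.mp hk))]
    -- now convert sqrt powers
    have hsp : ((Real.sqrt p : ℝ) : ℂ) ^ (2*n) = (p:ℂ) ^ n := by
      rw [pow_mul, hsq]
    rw [hsp]
    have hpn : (p:ℂ) ^ n * (A n * (p:ℂ) ^ (-((n:ℕ):ℤ))) = A n := by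
      rw [show (p:ℂ) ^ n = (p:ℂ) ^ ((n:ℕ):ℤ) from (zpow_natCast _ _).symm, ← mul_assoc,
        mul_comm ((p:ℂ) ^ ((n:ℕ):ℤ)) (A n), mul_assoc, ← zpow_add₀ hpc]
      simp
    rw [hpn]
    have key := satake_key (p:ℂ) δ hpc hδ0 (sub_ne_zero.mpr hδ1) A hA m
    calc ∑ k ∈ Finset.range m, (p:ℂ)^n * (1 - 1/(p:ℂ)) * (A (k+1) * (p:ℂ) ^ (-((k:ℤ)+1)))
          + (p:ℂ)^n * (1 - 1/(p:ℂ)) + A n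
        = (p:ℂ)^(m+1) * (1 - 1/(p:ℂ)) *
            (1 + ∑ k ∈ Finset.range m, A (k+1) * (p:ℂ) ^ (-((k:ℤ)+1))) + A (m+1) := by
          rw [hndef, ← Finset.mul_sum]
          ring
        _ = δ ^ (2 * ((m:ℤ) + 1)) + δ ^ (-(2 * ((m:ℤ) + 1))) := key
        _ = δ ^ (2 * ((n:ℕ):ℤ)) + δ ^ (-(2 * ((n:ℕ):ℤ))) := by
          rw [hndef]; push_cast; ring_nf
  · simp [hφ0, hF]
end
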